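/- arXiv:math/0412325 — 2 statements merged into one kernel-verified Lean document; each statement's English description precedes it below -/
import Mathlib

section
/- Let D_1 be the degree-zero derivation of the exterior algebra Λ^*(e^2, e^3, ...) over a field K defined by D_1(e^2) = 0 and D_1(e^i) = e^{i-1} for i ≥ 3, extended as a derivation. Then D_1 is surjective. -/
variable (K : Type*) [Field K]

/-- The generator `e^i` (for `i ≥ 2`) of the exterior algebra `Λ^*(e^2, e^3, ...)`. -/
noncomputable def e (i : ℕ) : ExteriorAlgebra K (ℕ →₀ K) :=
  ExteriorAlgebra.ι K (Finsupp.single (i - 2) (1 : K))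

/-- The monomial `e^{i_1} ∧ ... ∧ e^{i_q}` associated to a finite set of indices. -/
noncomputable def mono (s : Finset ℕ) : ExteriorAlgebra K (ℕ →₀ K) :=
  ((s.sort (· ≤ ·)).map (e K)).prod

/-- The span of nonconstant monomials `e^{i_1} ∧ ... ∧ e^{i_q}`, `q ≥ 1`,
`2 ≤ i_1 < ... < i_q` (the positive-degree part of the exterior algebra). -/
noncomputable def Lplus : Submodule K (ExteriorAlgebra K (ℕ →₀ K)) :=
  Submodule.span K {x | ∃ s : Finset ℕ, s.Nonempty ∧ (∀ i ∈ s, 2 ≤ i) ∧ x = mono K s}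

/-- Product of generators along a list of indices (not necessarily sorted). -/
noncomputable def prodE (l : List ℕ) : ExteriorAlgebra K (ℕ →₀ K) :=
  (l.map (e K)).prod

lemma prodE_nil : prodE K [] = 1 := rfl

lemma prodE_cons (a : ℕ) (l : List ℕ) : prodE K (a :: l) = e K a * prodE K l := by
  simp [prodE]

lemma prodE_singleton (a : ℕ) : prodE K [a] = e K a := by
  simp [prodE]

lemma prodE_concat (l : List ℕ) (M : ℕ) :
    prodE K (l ++ [M]) = prodE K l * e K M := by
  simp [prodE]

lemma e_sq (a : ℕ) : e K a * e K a = 0 := ExteriorAlgebra.ι_sq_zero _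

lemma e_anticomm (a b : ℕ) : e K a * e K b = -(e K b * e K a) := by
  have := ExteriorAlgebra.ι_add_mul_swap (R := K)
    (Finsupp.single (a - 2) (1 : K)) (Finsupp.single (b - 2) (1 : K))
  unfold e
  exact eq_neg_of_add_eq_zero_left this

lemma mono_toFinset (l : List ℕ) (h : l.Pairwise (· < ·)) :
    mono K l.toFinset = prodE K l := by
  have hnd : l.Nodup := h.nodup
  have hsort : l.toFinset.sort (· ≤ ·) = l :=
    (List.toFinset_sort (· ≤ ·) hnd).mpr (h.imp le_of_lt)
  unfold mono prodE
  rw [hsort]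

/-- Multiplying a sorted product by a generator on the left yields, up to sign,
a sorted product over the same support with the new index inserted (or zero). -/
lemma insert_sorted (j : ℕ) :
    ∀ l : List ℕ, l.Pairwise (· < ·) →
      e K j * prodE K l = 0 ∨
      ∃ m : List ℕ, m.Pairwise (· < ·) ∧ (∀ i, i ∈ m ↔ i = j ∨ i ∈ l) ∧
        (e K j * prodE K l = prodE K m ∨ e K j * prodE K l = -prodE K m) := by
  intro l
  induction l with
  | nil =>
    intro _
    right
    refine ⟨[j], by simp, by simp, Or.inl ?_⟩
    simp [prodE]
  | cons a t ih =>
    intro hs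
    have ht : t.Pairwise (· < ·) := hs.of_cons
    have hat : ∀ b ∈ t, a < b := fun b hb => (List.pairwise_cons.mp hs).1 b hb
    rcases lt_trichotomy j a with h | h | h
    · right
      refine ⟨j :: a :: t, ?_, by simp, Or.inl ?_⟩
      · exact List.pairwise_cons.mpr ⟨by
          intro b hb
          rcases List.mem_cons.mp hb with rfl | hb
          · exact h
          · exact h.trans (hat b hb), hs⟩
      · simp [prodE_cons]
    · left
      subst h
      rw [prodE_cons, ← mul_assoc, e_sq, zero_mul]
    · -- j > a : swap
      have key : e K j * prodE K (a :: t) = -(e K a * (e K j * prodE K t)) := by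
        rw [prodE_cons, ← mul_assoc, e_anticomm K j a, neg_mul, mul_assoc]
      rcases ih ht with h0 | ⟨m, hm, hmem, hpm⟩
      · left
        rw [key, h0, mul_zero, neg_zero]
      · right
        have ham : ∀ b ∈ m, a < b := by
          intro b hb
          rcases (hmem b).mp hb with rfl | hb
          · exact h
          · exact hat b hb
        refine ⟨a :: m, List.pairwise_cons.mpr ⟨ham, hm⟩, ?_, ?_⟩
        · intro i
          simp only [List.mem_cons, hmem i]
          tauto
        · rcases hpm with hp | hp
          · right
            rw [key, hp, prodE_cons]
          · left
            rw [key, hp, prodE_cons, mul_neg, neg_neg]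
  
/-- Any nonempty product of generators with indices `≥ 2` lies in `Lplus`. -/
lemma sort_prodE :
    ∀ l : List ℕ, prodE K l = 0 ∨
      ∃ m : List ℕ, m.Pairwise (· < ·) ∧ (∀ i, i ∈ m ↔ i ∈ l) ∧
        (prodE K l = prodE K m ∨ prodE K l = -prodE K m) := by
  intro l
  induction l with
  | nil => exact Or.inr ⟨[], by simp, by simp, Or.inl rfl⟩
  | cons j t ih =>
    rcases ih with h0 | ⟨m, hm, hmem, hpm⟩
    · left
      rw [prodE_cons, h0, mul_zero]
    · have base : ∀ x : ExteriorAlgebra K (ℕ →₀ K),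
          (e K j * prodE K m = x) →
          (prodE K (j :: t) = e K j * prodE K m ∨
           prodE K (j :: t) = -(e K j * prodE K m)) := by
        intro x _
        rcases hpm with hp | hp
        · left; rw [prodE_cons, hp]
        · right; rw [prodE_cons, hp, mul_neg]
      rcases insert_sorted K j m hm with h0 | ⟨m', hm', hmem', hpm'⟩
      · left
        rcases base _ rfl with h | h
        · rw [h, h0]
        · rw [h, h0, neg_zero]
      · right
        refine ⟨m', hm', ?_, ?_⟩
        · intro i
          rw [hmem' i, List.mem_cons, hmem i]
        · rcases base _ rfl with h | h <;> rcases hpm' with h' | h'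
          · left; rw [h, h']
          · right; rw [h, h']
          · right; rw [h, h']
          · left; rw [h, h', neg_neg]

lemma prodE_mem_Lplus (l : List ℕ) (hne : l ≠ []) (h2 : ∀ j ∈ l, 2 ≤ j) :
    prodE K l ∈ Lplus K := by
  rcases sort_prodE K l with h0 | ⟨m, hm, hmem, hpm⟩
  · rw [h0]; exact Submodule.zero_mem _
  · have hmne : m ≠ [] := by
      obtain ⟨a, t, rfl⟩ := List.exists_cons_of_ne_nil hne
      intro hnil
      have := (hmem a).mpr (List.mem_cons_self)
      rw [hnil] at this
      exact absurd this (List.not_mem_nil)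
    have hgen : prodE K m ∈ Lplus K := by
      apply Submodule.subset_span
      refine ⟨m.toFinset, ?_, ?_, (mono_toFinset K m hm).symm⟩
      · obtain ⟨a, t, rfl⟩ := List.exists_cons_of_ne_nil hmne
        exact ⟨a, by simp⟩
      · intro i hi
        exact h2 i ((hmem i).mp (List.mem_toFinset.mp hi))
    rcases hpm with hp | hp
    · rw [hp]; exact hgen
    · rw [hp]; exact Submodule.neg_mem _ hgen

section D

variable (D : ExteriorAlgebra K (ℕ →₀ K) →ₗ[K] ExteriorAlgebra K (ℕ →₀ K))
  (hLeib : ∀ x y, D (x * y) = D x * y + x * D y)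
  (h2D : D (e K 2) = 0)
  (hiD : ∀ i, 3 ≤ i → D (e K i) = e K (i - 1))

include hLeib in
lemma D_one : D 1 = 0 := by
  have := hLeib 1 1
  simp only [mul_one, one_mul] at this
  have h : D 1 + D 1 = D 1 + 0 := by rw [add_zero, ← this]
  exact (add_left_cancel h)

include hLeib h2D hiD in
lemma D_prodE_mem :
    ∀ l : List ℕ, (∀ j ∈ l, 2 ≤ j) →
      D (prodE K l) ∈ Submodule.span K
        {x | ∃ l' : List ℕ, (∀ j ∈ l', 2 ≤ j) ∧ l'.sum + 1 = l.sum ∧ x = prodE K l'} := by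
  intro l
  induction l with
  | nil =>
    intro _
    rw [prodE_nil, D_one K D hLeib]
    exact Submodule.zero_mem _
  | cons j t ih =>
    intro hjl
    have hj : 2 ≤ j := hjl j (List.mem_cons_self)
    have ht : ∀ i ∈ t, 2 ≤ i := fun i hi => hjl i (List.mem_cons_of_mem j hi)
    rw [prodE_cons, hLeib]
    apply Submodule.add_mem
    · -- D(e j) * prodE t
      rcases Nat.lt_or_ge j 3 with h3 | h3
      · have : j = 2 := by omega
        subst this
        rw [h2D, zero_mul]
        exact Submodule.zero_mem _
      · rw [hiD j h3]
        apply Submodule.subset_span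
        refine ⟨(j - 1) :: t, ?_, ?_, (prodE_cons K _ t).symm⟩
        · intro i hi
          rcases List.mem_cons.mp hi with rfl | hi
          · omega
          · exact ht i hi
        · simp only [List.sum_cons]
          omega
    · -- e j * D (prodE t)
      have hspan := ih ht
      refine Submodule.span_induction
        (p := fun x _ => e K j * x ∈ Submodule.span K
          {x | ∃ l' : List ℕ, (∀ i ∈ l', 2 ≤ i) ∧ l'.sum + 1 = (j :: t).sum ∧ x = prodE K l'})
        ?_ ?_ ?_ ?_ hspan
      · rintro x ⟨l', hl', hsum, rfl⟩
        apply Submodule.subset_span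
        refine ⟨j :: l', ?_, ?_, (prodE_cons K j l').symm⟩
        · intro i hi
          rcases List.mem_cons.mp hi with rfl | hi
          · exact hj
          · exact hl' i hi
        · simp only [List.sum_cons] at *
          omega
      · show e K j * 0 ∈ _
        rw [mul_zero]; exact Submodule.zero_mem _
      · intro x y _ _ hx hy
        show e K j * (x + y) ∈ _
        rw [mul_add]; exact Submodule.add_mem _ hx hy
      · intro a x _ hx
        show e K j * (a • x) ∈ _
        rw [mul_smul_comm]; exact Submodule.smul_mem _ a hx

include hLeib h2D hiD in
lemma main_lemma :
    ∀ n : ℕ, ∀ l : List ℕ, ∀ M : ℕ, (∀ j ∈ l, 2 ≤ j) → 2 ≤ M → l.sum ≤ n →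
      prodE K (l ++ [M]) ∈ Submodule.map D (Lplus K) := by
  intro n
  induction n with
  | zero =>
    intro l M hl hM hsum
    have hlnil : l = [] := by
      cases l with
      | nil => rfl
      | cons a t =>
        exfalso
        have := hl a (List.mem_cons_self)
        simp only [List.sum_cons] at hsum
        omega
    subst hlnil
    refine ⟨prodE K [M + 1], prodE_mem_Lplus K [M + 1] (by simp) (by intro j hj; simp at hj; omega), ?_⟩
    simp only [List.nil_append, prodE_singleton]
    rw [hiD (M + 1) (by omega)]
    norm_num
  | succ n ihn =>
    intro l M hl hM hsum
    have key : prodE K (l ++ [M]) =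
        D (prodE K (l ++ [M + 1])) - D (prodE K l) * e K (M + 1) := by
      rw [prodE_concat, prodE_concat, hLeib, hiD (M + 1) (by omega)]
      have hM1 : M + 1 - 1 = M := rfl
      rw [hM1]
      abel
    rw [key]
    apply Submodule.sub_mem
    · exact ⟨prodE K (l ++ [M + 1]),
        prodE_mem_Lplus K _ (by simp)
          (by
            intro j hj
            rcases List.mem_append.mp hj with hj | hj
            · exact hl j hj
            · simp at hj; omega), rfl⟩
    · have hspan := D_prodE_mem K D hLeib h2D hiD l hl
      refine Submodule.span_induction
        (p := fun x _ => x * e K (M + 1) ∈ Submodule.map D (Lplus K)) ?_ ?_ ?_ ?_ hspan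
      · rintro x ⟨l', hl', hsum', rfl⟩
        rw [← prodE_concat]
        exact ihn l' (M + 1) hl' (by omega) (by omega)
      · show (0 : ExteriorAlgebra K (ℕ →₀ K)) * e K (M + 1) ∈ _
        rw [zero_mul]; exact Submodule.zero_mem _
      · intro x y _ _ hx hy
        show (x + y) * e K (M + 1) ∈ _
        rw [add_mul]; exact Submodule.add_mem _ hx hy
      · intro a x _ hx
        show (a • x) * e K (M + 1) ∈ _
        rw [smul_mul_assoc]; exact Submodule.smul_mem _ a hx

end D

/-- Let `D₁` be the degree-zero derivation of `Λ^*(e^2, e^3, ...)` defined by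
`D₁(e^2) = 0`, `D₁(e^i) = e^{i-1}` for `i ≥ 3`, extended by the Leibniz rule.
Then `D₁` is surjective (onto each homogeneous piece, equivalently onto the subspace
spanned by the monomials). -/
theorem stmt3 (D : ExteriorAlgebra K (ℕ →₀ K) →ₗ[K] ExteriorAlgebra K (ℕ →₀ K))
    (hLeib : ∀ x y, D (x * y) = D x * y + x * D y)
    (h2 : D (e K 2) = 0)
    (hi : ∀ i, 3 ≤ i → D (e K i) = e K (i - 1)) :
    ∀ y ∈ Lplus K, ∃ x ∈ Lplus K, D x = y := by
  have hle : Lplus K ≤ Submodule.map D (Lplus K) := by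
    rw [Lplus, Submodule.span_le]
    rintro x ⟨s, hne, h2s, rfl⟩
    have hl : mono K s = prodE K (s.sort (· ≤ ·)) := rfl
    set l := s.sort (· ≤ ·) with hldef
    have hlne : l ≠ [] := by
      intro h
      have : s = ∅ := by
        have hc : s.card = 0 := by
          rw [← Finset.length_sort (· ≤ ·), ← hldef, h, List.length_nil]
        exact Finset.card_eq_zero.mp hc
      exact absurd this (Finset.nonempty_iff_ne_empty.mp hne)
    have hmem : ∀ j ∈ l, j ∈ s := fun j hj => (Finset.mem_sort _).mp hj
    have hsplit : l.dropLast ++ [l.getLast hlne] = l := List.dropLast_append_getLast hlne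
    rw [hl, ← hsplit]
    apply main_lemma K D hLeib h2 hi (l.dropLast.sum) l.dropLast (l.getLast hlne)
    · intro j hj
      exact h2s j (hmem j (List.dropLast_subset l hj))
    · exact h2s _ (hmem _ (List.getLast_mem hlne))
    · exact le_refl _
  intro y hy
  obtain ⟨x, hx, hDx⟩ := hle hy
  exact ⟨x, hx, hDx⟩
end

section
/- Define D_{-1} on the exterior algebra Λ^*(e^2, e^3, ...) by D_{-1}(e^i) = e^{i+1} and D_{-1}(ξ ∧ e^i) = Σ_{l≥0} (-1)^l D_1^l(ξ) ∧ e^{i+1+l} for ξ ∈ Λ^*(e^2,...,e^{i-1}). Then D_1 ∘ D_{-1} = Id, so D_{-1} is a right inverse of D_1. -/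
variable (K : Type*) [Field K]

/-- The span of the monomials `e^{i_1} ∧ ... ∧ e^{i_q}` with all indices `i_j` satisfying
`2 ≤ i_j < i` (the subalgebra part `Λ^*(e^2, ..., e^{i-1})`, scalars included). -/
noncomputable def LamBelow (i : ℕ) : Submodule K (ExteriorAlgebra K (ℕ →₀ K)) :=
  Submodule.span K {x | ∃ s : Finset ℕ, (∀ j ∈ s, 2 ≤ j ∧ j < i) ∧ x = mono K s}

theorem sort_max_append (s : Finset ℕ) (h : s.Nonempty) :
    s.sort (· ≤ ·) = (s.erase (s.max' h)).sort (· ≤ ·) ++ [s.max' h] := by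
  refine (fun h1 h2 h3 => List.Perm.eq_of_pairwise' (r := (· ≤ ·)) h2 h3 h1) ?_ ?_ ?_
  · rw [← Multiset.coe_eq_coe]
    have h1 : ((Finset.sort (s.erase (s.max' h)) (fun x1 x2 => x1 ≤ x2) ++ [s.max' h] : List ℕ) : Multiset ℕ)
        = ((Finset.sort (s.erase (s.max' h)) (fun x1 x2 => x1 ≤ x2) : List ℕ) : Multiset ℕ) + ([s.max' h] : List ℕ) := rfl
    rw [h1, Finset.sort_eq, Finset.sort_eq, Finset.erase_val, add_comm]
    have h2 : (([s.max' h] : List ℕ) : Multiset ℕ) = {s.max' h} := rfl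
    rw [h2, Multiset.singleton_add, Multiset.cons_erase]
    exact s.max'_mem h
  · exact Finset.pairwise_sort _ _
  · rw [List.pairwise_append]
    refine ⟨Finset.pairwise_sort _ _, List.pairwise_singleton _ _, ?_⟩
    intro a ha b hb
    rw [List.mem_singleton] at hb
    subst hb
    have := (Finset.mem_sort (α := ℕ) (· ≤ ·)).mp ha
    exact s.le_max' a (Finset.mem_of_mem_erase this)

/-- span of list-products of generators with indices ≥ 2 and total weight < n. -/
noncomputable def Nsub (n : ℕ) : Submodule K (ExteriorAlgebra K (ℕ →₀ K)) :=
  Submodule.span K {x | ∃ L : List ℕ, (∀ j ∈ L, 2 ≤ j) ∧ L.sum < n ∧ x = (L.map (e K)).prod}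

theorem Nsub_zero : Nsub K 0 = ⊥ := by
  rw [Nsub, ← Submodule.span_empty]
  congr 1
  ext x
  simp only [Set.mem_setOf_eq, Set.mem_empty_iff_false, iff_false]
  rintro ⟨L, _, hlt, _⟩
  omega

theorem Nsub_mono {n m : ℕ} (h : n ≤ m) : Nsub K n ≤ Nsub K m := by
  apply Submodule.span_mono
  rintro x ⟨L, h2, hlt, rfl⟩
  exact ⟨L, h2, lt_of_lt_of_le hlt h, rfl⟩

variable {K}

theorem D_one_s4 (D : Module.End K (ExteriorAlgebra K (ℕ →₀ K)))
    (hLeib : ∀ x y, D (x * y) = D x * y + x * D y) : D 1 = 0 := by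
  have := hLeib 1 1
  rw [one_mul, mul_one, one_mul] at this
  exact (left_eq_add.mp this)

theorem mul_Nsub (j n : ℕ) (hj : 2 ≤ j) {x : ExteriorAlgebra K (ℕ →₀ K)}
    (hx : x ∈ Nsub K n) : e K j * x ∈ Nsub K (n + j) := by
  have : Nsub K n ≤ Submodule.comap (LinearMap.mulLeft K (e K j)) (Nsub K (n + j)) := by
    rw [Nsub, Submodule.span_le]
    rintro x ⟨L, h2, hlt, rfl⟩
    rw [SetLike.mem_coe, Submodule.mem_comap, LinearMap.mulLeft_apply]
    apply Submodule.subset_span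
    refine ⟨j :: L, ?_, by simp only [List.sum_cons]; omega, by rw [List.map_cons, List.prod_cons]⟩
    intro a ha
    rcases List.mem_cons.mp ha with h | h
    · omega
    · exact h2 a h
  exact this hx

theorem D_prod (D : Module.End K (ExteriorAlgebra K (ℕ →₀ K)))
    (hLeib : ∀ x y, D (x * y) = D x * y + x * D y)
    (h2 : D (e K 2) = 0)
    (hi : ∀ i, 3 ≤ i → D (e K i) = e K (i - 1)) :
    ∀ L : List ℕ, (∀ j ∈ L, 2 ≤ j) → D ((L.map (e K)).prod) ∈ Nsub K L.sum := by
  intro L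
  induction L with
  | nil => intro _; simp [D_one_s4 D hLeib]
  | cons j tl ih =>
    intro hmem
    have hj : 2 ≤ j := hmem j List.mem_cons_self
    have htl : ∀ a ∈ tl, 2 ≤ a := fun a ha => hmem a (List.mem_cons_of_mem _ ha)
    rw [List.map_cons, List.prod_cons, hLeib]
    apply Submodule.add_mem
    · rcases eq_or_lt_of_le hj with hj2 | hj3
      · rw [← hj2, h2, zero_mul]; exact Submodule.zero_mem _
      · rw [hi j hj3]
        apply Submodule.subset_span
        refine ⟨(j - 1) :: tl, ?_, by simp; omega, by simp⟩
        intro a ha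
        rcases List.mem_cons.mp ha with h | h
        · omega
        · exact htl a h
    · have := mul_Nsub j tl.sum hj (ih htl)
      exact Nsub_mono K (by simp; omega) this

theorem Dpow_Nsub (D : Module.End K (ExteriorAlgebra K (ℕ →₀ K)))
    (hLeib : ∀ x y, D (x * y) = D x * y + x * D y)
    (h2 : D (e K 2) = 0)
    (hi : ∀ i, 3 ≤ i → D (e K i) = e K (i - 1)) :
    ∀ n, ∀ x ∈ Nsub K n, (D ^ n) x = 0 := by
  intro n
  induction n with
  | zero => intro x hx; rw [Nsub_zero, Submodule.mem_bot] at hx; rw [hx, map_zero]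
  | succ n ih =>
    intro x hx
    have hstep : D x ∈ Nsub K n := by
      have : Nsub K (n + 1) ≤ Submodule.comap D (Nsub K n) := by
        rw [Nsub, Submodule.span_le]
        rintro y ⟨L, hL2, hlt, rfl⟩
        rw [SetLike.mem_coe, Submodule.mem_comap]
        exact Nsub_mono K (by omega) (D_prod D hLeib h2 hi L hL2)
      exact this hx
    rw [pow_succ, Module.End.mul_apply]
    exact ih _ hstep

theorem Dpow_nilp (D : Module.End K (ExteriorAlgebra K (ℕ →₀ K)))
    (hLeib : ∀ x y, D (x * y) = D x * y + x * D y)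
    (h2 : D (e K 2) = 0)
    (hi : ∀ i, 3 ≤ i → D (e K i) = e K (i - 1))
    (L : List ℕ) (hL : ∀ j ∈ L, 2 ≤ j) :
    ∀ l, L.sum + 1 ≤ l → (D ^ l) ((L.map (e K)).prod) = 0 := by
  intro l hl
  obtain ⟨k, rfl⟩ : ∃ k, l = k + (L.sum + 1) := ⟨l - (L.sum + 1), by omega⟩
  rw [pow_add, Module.End.mul_apply, pow_succ, Module.End.mul_apply,
    Dpow_Nsub D hLeib h2 hi L.sum (D _) (D_prod D hLeib h2 hi L hL), map_zero]

/-- Let `D₁` be the derivation of `Λ^*(e^2,e^3,...)` with `D₁(e^2)=0`, `D₁(e^i)=e^{i-1}`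
(`i ≥ 3`), and define `D₋₁` by `D₋₁(e^i) = e^{i+1}` and
`D₋₁(ξ ∧ e^i) = Σ_{l ≥ 0} (-1)^l D₁^l(ξ) ∧ e^{i+1+l}` for `ξ ∈ Λ^*(e^2,...,e^{i-1})`
(the sum is finite since `D₁^l(ξ) = 0` for large `l`).  Then `D₁ ∘ D₋₁ = Id`, i.e.
`D₋₁` is a right inverse of `D₁`. -/
theorem stmt4 (D Dm : Module.End K (ExteriorAlgebra K (ℕ →₀ K)))
    (hLeib : ∀ x y, D (x * y) = D x * y + x * D y)
    (h2 : D (e K 2) = 0)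
    (hi : ∀ i, 3 ≤ i → D (e K i) = e K (i - 1))
    (hm1 : ∀ i, 2 ≤ i → Dm (e K i) = e K (i + 1))
    (hm2 : ∀ i, 2 ≤ i → ∀ ξ ∈ LamBelow K i, ∀ L : ℕ,
      (∀ l, L ≤ l → (D ^ l) ξ = 0) →
      Dm (ξ * e K i) =
        ∑ l ∈ Finset.range L, ((-1 : K) ^ l) • ((D ^ l) ξ * e K (i + 1 + l))) :
    ∀ y ∈ Lplus K, D (Dm y) = y := by
  intro y hy
  induction hy using Submodule.span_induction with
  | mem x hx =>
    obtain ⟨s, hne, hs2, rfl⟩ := hx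
    set m := s.max' hne with hm
    have hm2le : 2 ≤ m := hs2 m (s.max'_mem hne)
    set t := s.erase m with ht
    set Lst := t.sort (· ≤ ·) with hLst
    have hLst2 : ∀ j ∈ Lst, 2 ≤ j := by
      intro j hj
      exact hs2 j (Finset.mem_of_mem_erase ((Finset.mem_sort _).mp hj))
    set ξ := (Lst.map (e K)).prod with hxi
    have hsplit : mono K s = ξ * e K m := by
      rw [mono, sort_max_append s hne, List.map_append, List.prod_append]
      simp [hxi]
      rfl
    have hξmem : ξ ∈ LamBelow K m := by
      apply Submodule.subset_span
      refine ⟨t, ?_, rfl⟩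
      intro j hj
      refine ⟨hs2 j (Finset.mem_of_mem_erase hj), ?_⟩
      have h1 := s.le_max' j (Finset.mem_of_mem_erase hj)
      have h2' := (Finset.mem_erase.mp hj).1
      omega
    set W := Lst.sum + 1 with hW
    have hnil : ∀ l, W ≤ l → (D ^ l) ξ = 0 :=
      fun l hl => Dpow_nilp D hLeib h2 hi Lst hLst2 l hl
    rw [hsplit, hm2 m hm2le ξ hξmem W hnil, map_sum]
    set f : ℕ → ExteriorAlgebra K (ℕ →₀ K) :=
      fun l => ((-1 : K) ^ l) • ((D ^ l) ξ * e K (m + l)) with hf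
    have hterm : ∀ l ∈ Finset.range W,
        D (((-1 : K) ^ l) • ((D ^ l) ξ * e K (m + 1 + l))) = f l - f (l + 1) := by
      intro l _
      rw [map_smul, hLeib]
      have hDe : D (e K (m + 1 + l)) = e K (m + l) := by
        rw [hi (m + 1 + l) (by omega)]
        congr 1
        omega
      have hDpow : D ((D ^ l) ξ) = (D ^ (l + 1)) ξ := by
        rw [pow_succ', Module.End.mul_apply]
      have hf1 : f (l + 1) = -(((-1 : K) ^ l) • ((D ^ (l + 1)) ξ * e K (m + 1 + l))) := by
        have hidx : m + (l + 1) = m + 1 + l := by omega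
        show ((-1 : K) ^ (l + 1)) • ((D ^ (l + 1)) ξ * e K (m + (l + 1))) = _
        rw [hidx, pow_succ, mul_comm, mul_smul, neg_one_smul]
      rw [hDe, hDpow, smul_add, hf1]
      show _ = ((-1 : K) ^ l) • ((D ^ l) ξ * e K (m + l)) - _
      abel
    rw [Finset.sum_congr rfl hterm, Finset.sum_range_sub' f W]
    have hfW : f W = 0 := by
      rw [hf]
      simp [hnil W le_rfl]
    rw [hfW, sub_zero, hf]
    simp [hsplit]
  | zero => simp
  | add x y _ _ hx hy => rw [map_add, map_add, hx, hy]
  | smul c x _ hx => rw [map_smul, map_smul, hx]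
end
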